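/- Every pure state |ψ⟩ ∈ (ℂ²)^⊗(m+n) can be written as |ψ⟩ = Σ_{j=0}^{2^m−1} √p_j |j⟩ ⊗ |ψ_j⟩ for some probability distribution (p_j) and unit vectors |ψ_j⟩ ∈ (ℂ²)^⊗n, and consequently |ψ⟩ = W|0⟩^⊗(m+n) for some W of the LCQNN form W = (Π_j C-U_j)(V ⊗ I) with suitable unitaries V on (ℂ²)^⊗m and U_j on (ℂ²)^⊗n. -/

import Mathlib

open Matrix Finset
open scoped Kronecker

lemma list_ofFn_ite_prod {M : Type*} [Monoid M] :
    ∀ (N : ℕ) (A : Fin N → M) (i : Fin N),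
      (List.ofFn fun j => if i = j then A j else 1).prod = A i := by
  intro N
  induction N with
  | zero => exact fun A i => i.elim0
  | succ N ih =>
    intro A i
    rw [List.ofFn_succ]
    induction i using Fin.cases with
    | zero =>
      have h : (fun j : Fin N => if (0 : Fin (N + 1)) = Fin.succ j then A (Fin.succ j) else 1)
          = fun _ => 1 := by
        funext j
        simp [(Fin.succ_ne_zero j).symm]
      simp [h, List.ofFn_const]
    | succ i' =>
      have h : (fun j : Fin N => if Fin.succ i' = Fin.succ j then A (Fin.succ j) else 1)
          = fun j => if i' = j then (A ∘ Fin.succ) j else 1 := by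
        funext j
        simp [Fin.succ_inj]
      rw [if_neg (fun hh : Fin.succ i' = 0 => (Fin.succ_ne_zero i') hh)]
      rw [h, List.prod_cons, ih (A ∘ Fin.succ) i', one_mul, Function.comp_apply]

lemma exists_unitary_firstCol (N : ℕ) [NeZero N] (v : Fin N → ℂ)
    (hv : ∑ a, ‖v a‖ ^ 2 = 1) :
    ∃ A ∈ Matrix.unitaryGroup (Fin N) ℂ, ∀ a, A a 0 = v a := by
  classical
  let v' : EuclideanSpace ℂ (Fin N) := WithLp.toLp 2 v
  have hnorm : ‖v'‖ = 1 := by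
    rw [EuclideanSpace.norm_eq]
    have : ∑ a, ‖v' a‖ ^ 2 = 1 := hv
    rw [this, Real.sqrt_one]
  have horth : Orthonormal ℂ (({0} : Set (Fin N)).restrict (fun _ : Fin N => v')) := by
    refine ⟨fun i => hnorm, fun i j hij => absurd ?_ hij⟩
    exact Subtype.ext (i.2.trans j.2.symm)
  obtain ⟨b, hb⟩ := horth.exists_orthonormalBasis_extension_of_card_eq
    (by simp [finrank_euclideanSpace])
  refine ⟨(EuclideanSpace.basisFun (Fin N) ℂ).toBasis.toMatrix b,
    (EuclideanSpace.basisFun (Fin N) ℂ).toMatrix_orthonormalBasis_mem_unitary b, fun a => ?_⟩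
  have hb0 : b 0 = v' := hb 0 rfl
  rw [Module.Basis.toMatrix_apply, hb0, OrthonormalBasis.coe_toBasis_repr_apply,
    EuclideanSpace.basisFun_repr]

/-- every pure state on `m + n` qubits decomposes as
`Σ_j √p_j |j⟩ ⊗ |ψ_j⟩` and can be prepared as `W|0⟩` by an LCQNN
`W = (Π_j C-U_j)(V ⊗ I)`.  Indices ordered as (working, control). -/
theorem lcqnn_expressivity (m n : ℕ) (hm : 1 ≤ m) (hn : 1 ≤ n)
    (ψ : Fin (2 ^ n) × Fin (2 ^ m) → ℂ)
    (hψ : ∑ x, ‖ψ x‖ ^ 2 = 1) :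
    ∃ (p : Fin (2 ^ m) → ℝ) (ψj : Fin (2 ^ m) → Fin (2 ^ n) → ℂ)
      (V : Matrix (Fin (2 ^ m)) (Fin (2 ^ m)) ℂ)
      (U : Fin (2 ^ m) → Matrix (Fin (2 ^ n)) (Fin (2 ^ n)) ℂ),
      (∀ j, 0 ≤ p j) ∧ (∑ j, p j = 1) ∧
      (∀ j, ∑ a, ‖ψj j a‖ ^ 2 = 1) ∧
      (∀ x : Fin (2 ^ n) × Fin (2 ^ m),
        ψ x = (Real.sqrt (p x.2) : ℂ) * ψj x.2 x.1) ∧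
      V ∈ Matrix.unitaryGroup (Fin (2 ^ m)) ℂ ∧
      (∀ j, U j ∈ Matrix.unitaryGroup (Fin (2 ^ n)) ℂ) ∧
      ((List.ofFn fun j : Fin (2 ^ m) =>
            Matrix.blockDiagonal (fun i => if i = j then U j else 1)).prod *
          ((1 : Matrix (Fin (2 ^ n)) (Fin (2 ^ n)) ℂ) ⊗ₖ V)) *ᵥ
          (fun x : Fin (2 ^ n) × Fin (2 ^ m) =>
            if (x.1 : ℕ) = 0 ∧ (x.2 : ℕ) = 0 then (1 : ℂ) else 0) = ψ := by
  classical
  haveI : NeZero (2 ^ n) := ⟨by positivity⟩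
  haveI : NeZero (2 ^ m) := ⟨by positivity⟩
  set p : Fin (2 ^ m) → ℝ := fun j => ∑ a, ‖ψ (a, j)‖ ^ 2 with hp
  have hp0 : ∀ j, 0 ≤ p j := fun j =>
    Finset.sum_nonneg fun a _ => sq_nonneg _
  have hpsum : ∑ j, p j = 1 := by
    rw [← hψ, Fintype.sum_prod_type_right]
  have hterm : ∀ j, p j = 0 → ∀ a, ψ (a, j) = 0 := by
    intro j hj a
    have := (Finset.sum_eq_zero_iff_of_nonneg (fun a _ => sq_nonneg ‖ψ (a, j)‖)).mp hj a
      (Finset.mem_univ a)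
    simpa using this
  set ψj : Fin (2 ^ m) → Fin (2 ^ n) → ℂ := fun j =>
    if p j = 0 then Pi.single 0 1 else fun a => ψ (a, j) / (Real.sqrt (p j) : ℂ) with hψj
  have hψjnorm : ∀ j, ∑ a, ‖ψj j a‖ ^ 2 = 1 := by
    intro j
    by_cases hj : p j = 0
    · simp only [hψj, if_pos hj]
      rw [Fintype.sum_eq_single (0 : Fin (2 ^ n))]
      · simp
      · intro a ha; simp [Pi.single_apply, ha]
    · simp only [hψj, if_neg hj]
      have hjpos : 0 < p j := lt_of_le_of_ne (hp0 j) (Ne.symm hj)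
      have hs : ‖(Real.sqrt (p j) : ℂ)‖ = Real.sqrt (p j) := by
        rw [Complex.norm_real, Real.norm_eq_abs, abs_of_nonneg (Real.sqrt_nonneg _)]
      have : ∀ a, ‖ψ (a, j) / (Real.sqrt (p j) : ℂ)‖ ^ 2 = ‖ψ (a, j)‖ ^ 2 / p j := by
        intro a
        rw [norm_div, div_pow, hs, Real.sq_sqrt (hp0 j)]
      simp_rw [this, ← Finset.sum_div]
      exact div_self hj
  have hdecomp : ∀ x : Fin (2 ^ n) × Fin (2 ^ m),
      ψ x = (Real.sqrt (p x.2) : ℂ) * ψj x.2 x.1 := by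
    rintro ⟨a, j⟩
    by_cases hj : p j = 0
    · simp [hterm j hj a, hj]
    · have hjpos : 0 < p j := lt_of_le_of_ne (hp0 j) (Ne.symm hj)
      have hs : (Real.sqrt (p j) : ℂ) ≠ 0 := by
        exact_mod_cast Complex.ofReal_ne_zero.mpr (Real.sqrt_ne_zero'.mpr hjpos)
      simp only [hψj, if_neg hj]
      field_simp
  obtain ⟨V, hVu, hVcol⟩ := exists_unitary_firstCol (2 ^ m)
    (fun j => (Real.sqrt (p j) : ℂ)) (by
      have : ∀ j, ‖(Real.sqrt (p j) : ℂ)‖ ^ 2 = p j := by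
        intro j
        rw [Complex.norm_real, Real.norm_eq_abs, abs_of_nonneg (Real.sqrt_nonneg _),
          Real.sq_sqrt (hp0 j)]
      simp_rw [this]; exact hpsum)
  have hU : ∀ j, ∃ A ∈ Matrix.unitaryGroup (Fin (2 ^ n)) ℂ, ∀ a, A a 0 = ψj j a :=
    fun j => exists_unitary_firstCol (2 ^ n) (ψj j) (hψjnorm j)
  choose U hUu hUcol using hU
  refine ⟨p, ψj, V, U, hp0, hpsum, hψjnorm, hdecomp, hVu, hUu, ?_⟩
  -- compute the list product
  have hprod : (List.ofFn fun j : Fin (2 ^ m) =>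
      Matrix.blockDiagonal (fun i => if i = j then U j else 1)).prod
      = Matrix.blockDiagonal U := by
    have h1 : (List.ofFn fun j : Fin (2 ^ m) =>
        Matrix.blockDiagonal (fun i => if i = j then U j else 1))
        = List.map (Matrix.blockDiagonalRingHom (Fin (2 ^ n)) (Fin (2 ^ m)) ℂ)
          (List.ofFn fun j : Fin (2 ^ m) => (fun i => if i = j then U j else 1)) := by
      rw [List.map_ofFn]
      rfl
    rw [h1, ← map_list_prod]
    have h2 : (List.ofFn fun j : Fin (2 ^ m) =>
        (fun i => if i = j then U j else 1)).prod = U := by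
      funext i
      rw [Pi.list_prod_apply]
      rw [List.map_ofFn]
      have h3 : ((fun f : Fin (2 ^ m) → Matrix (Fin (2 ^ n)) (Fin (2 ^ n)) ℂ => f i) ∘
          (fun j : Fin (2 ^ m) => (fun i' => if i' = j then U j else 1)))
          = fun j => if i = j then U j else 1 := rfl
      rw [h3, list_ofFn_ite_prod]
    rw [h2]
    rfl
  rw [hprod]
  -- identify the initial vector with Pi.single
  have he : (fun x : Fin (2 ^ n) × Fin (2 ^ m) =>
      if (x.1 : ℕ) = 0 ∧ (x.2 : ℕ) = 0 then (1 : ℂ) else 0)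
      = Pi.single ((0 : Fin (2 ^ n)), (0 : Fin (2 ^ m))) (1 : ℂ) := by
    funext x
    rw [Pi.single_apply]
    congr 1
    simp only [Prod.ext_iff, Fin.ext_iff, Fin.val_zero]
  rw [he, Matrix.mulVec_single]
  funext x
  obtain ⟨a, j⟩ := x
  rw [Pi.smul_apply, op_smul_eq_mul, Matrix.col_apply]
  rw [Matrix.mul_apply]
  rw [Fintype.sum_prod_type]
  have hterm2 : ∀ (b : Fin (2 ^ n)) (k : Fin (2 ^ m)),
      Matrix.blockDiagonal U (a, j) (b, k) *
        ((1 : Matrix (Fin (2 ^ n)) (Fin (2 ^ n)) ℂ) ⊗ₖ V) (b, k) (0, 0)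
      = (if j = k then U j a b else 0) * ((if b = 0 then 1 else 0) * V k 0) := by
    intro b k
    rw [Matrix.blockDiagonal_apply, Matrix.kroneckerMap_apply, Matrix.one_apply]
  simp_rw [hterm2]
  simp only [ite_mul, zero_mul, one_mul, mul_ite, mul_zero]
  rw [Finset.sum_comm]
  rw [Fintype.sum_eq_single j]
  · rw [Fintype.sum_eq_single (0 : Fin (2 ^ n))]
    · simp only [if_pos rfl]
      rw [mul_one, hUcol j a, hVcol j, hdecomp (a, j)]
      simp [mul_comm]
    · intro b hb
      simp [hb]
  · intro k hk
    rw [Finset.sum_eq_zero]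
    intro b _
    simp [Ne.symm hk]
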